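/- For z ∈ ℝ^M, the vector Sparsemax(z) := [z − τ(z)·1_M]_+ (with τ defined by the threshold condition ∑_μ [z_μ − τ(z)]_+ = 1) lies in the simplex Δ^M and is the unique minimizer of ‖p − z‖² over p ∈ Δ^M. -/

import Mathlib

open scoped BigOperators

/-- The probability simplex in `ℝ^M`. -/
def simplex (M : ℕ) : Set (EuclideanSpace ℝ (Fin M)) :=
  {p | (∀ i, 0 ≤ p i) ∧ ∑ i, p i = 1}

lemma normsq_eq' {M : ℕ} (x : EuclideanSpace ℝ (Fin M)) :
    ‖x‖ ^ 2 = ∑ i, (x i) ^ 2 := by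
  rw [EuclideanSpace.norm_eq, Real.sq_sqrt (by positivity)]
  simp [sq_abs]

/-- with `τ` the threshold satisfying `∑_μ [z_μ − τ]_+ = 1`, the vector
`Sparsemax(z) = [z − τ·1]_+` lies in the simplex and is the unique minimizer of
`‖p − z‖²` over the simplex. -/
theorem sparsemax_is_projection (M : ℕ) (z : EuclideanSpace ℝ (Fin M)) (τ : ℝ)
    (hτ : ∑ μ, max 0 (z μ - τ) = 1)
    (p : EuclideanSpace ℝ (Fin M)) (hp : p = fun μ => max 0 (z μ - τ)) :
    p ∈ simplex M ∧
      (∀ q ∈ simplex M, ‖p - z‖ ^ 2 ≤ ‖q - z‖ ^ 2) ∧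
      (∀ q ∈ simplex M, ‖q - z‖ ^ 2 = ‖p - z‖ ^ 2 → q = p) := by
  have hpi : ∀ i, p i = max 0 (z i - τ) := fun i => by rw [hp]
  have hpos : ∀ i, 0 ≤ p i := fun i => by rw [hpi]; exact le_max_left _ _
  have hsum : ∑ i, p i = 1 := by simp only [hpi]; exact hτ
  have hmem : p ∈ simplex M := ⟨hpos, hsum⟩
  -- p i - z i = -(min (z i) τ)
  have h1 : ∀ i, p i - z i = -(min (z i) τ) := by
    intro i
    rw [hpi i]
    rcases le_total (z i) τ with h | h
    · rw [max_eq_left (by linarith), min_eq_left h]; ring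
    · rw [max_eq_right (by linarith), min_eq_right h]; ring
  have h2 : ∀ i, p i * min (z i) τ = p i * τ := by
    intro i
    rcases le_total (z i) τ with h | h
    · have : p i = 0 := by rw [hpi i]; exact max_eq_left (by linarith)
      rw [this]; ring
    · rw [min_eq_right h]
  have key : ∀ q ∈ simplex M, 0 ≤ ∑ i, (q i - p i) * (p i - z i) := by
    intro q ⟨hq0, hq1⟩
    have : ∑ i, (q i - p i) * (p i - z i)
        = ∑ i, p i * τ - ∑ i, q i * min (z i) τ := by
      rw [← Finset.sum_sub_distrib]
      apply Finset.sum_congr rfl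
      intro i _
      rw [← h2 i, h1 i]; ring
    rw [this]
    have hle : ∑ i, q i * min (z i) τ ≤ ∑ i, q i * τ := by
      apply Finset.sum_le_sum
      intro i _
      exact mul_le_mul_of_nonneg_left (min_le_right _ _) (hq0 i)
    have e1 : ∑ i, p i * τ = τ := by rw [← Finset.sum_mul, hsum, one_mul]
    have e2 : ∑ i, q i * τ = τ := by rw [← Finset.sum_mul, hq1, one_mul]
    linarith
  have expand : ∀ q : EuclideanSpace ℝ (Fin M),
      ‖q - z‖ ^ 2 = ∑ i, (p i - z i) ^ 2 + (∑ i, (q i - p i) ^ 2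
        + 2 * ∑ i, (q i - p i) * (p i - z i)) := by
    intro q
    rw [normsq_eq']
    simp only [PiLp.sub_apply]
    rw [Finset.mul_sum, ← Finset.sum_add_distrib, ← Finset.sum_add_distrib]
    apply Finset.sum_congr rfl
    intro i _
    ring
  have hpz : ‖p - z‖ ^ 2 = ∑ i, (p i - z i) ^ 2 := by
    rw [normsq_eq']
    simp [PiLp.sub_apply]
  refine ⟨hmem, ?_, ?_⟩
  · intro q hq
    have h3 := key q hq
    have h4 : 0 ≤ ∑ i, (q i - p i) ^ 2 :=
      Finset.sum_nonneg fun i _ => sq_nonneg _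
    rw [expand q, hpz]
    linarith
  · intro q hq heq
    have h3 := key q hq
    have h5 : ∑ i, (q i - p i) ^ 2 = 0 := by
      have := expand q
      rw [heq, hpz] at this
      have h4 : 0 ≤ ∑ i, (q i - p i) ^ 2 :=
        Finset.sum_nonneg fun i _ => sq_nonneg _
      linarith
    have h6 : ∀ i ∈ Finset.univ, (q i - p i) ^ 2 = 0 :=
      (Finset.sum_eq_zero_iff_of_nonneg fun i _ => sq_nonneg _).mp h5
    ext i
    have := h6 i (Finset.mem_univ i)
    have := sq_eq_zero_iff.mp this
    linarith
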